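/- If q² is a primitive l-th root of unity (l > 1), then x^l, y^l and z^l are central elements of A(α,β,γ). -/

import Mathlib

noncomputable section

open FreeAlgebra

/-- The defining relations of the 3-cyclic quantum Weyl algebra `A(α,β,γ)`:
`xy = q²yx + α`, `xz = q⁻²zx + β`, `yz = q²zy + γ`. -/
inductive CQWRel (K : Type) [Field K] (q α β γ : K) :
    FreeAlgebra K (Fin 3) → FreeAlgebra K (Fin 3) → Prop
  | xy : CQWRel K q α β γ (ι K (0 : Fin 3) * ι K 1)
      (q ^ 2 • (ι K (1 : Fin 3) * ι K 0) + algebraMap K _ α)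
  | xz : CQWRel K q α β γ (ι K (0 : Fin 3) * ι K 2)
      (q⁻¹ ^ 2 • (ι K (2 : Fin 3) * ι K 0) + algebraMap K _ β)
  | yz : CQWRel K q α β γ (ι K (1 : Fin 3) * ι K 2)
      (q ^ 2 • (ι K (2 : Fin 3) * ι K 1) + algebraMap K _ γ)

/-- The 3-cyclic quantum Weyl algebra `A(α,β,γ)`. -/
abbrev CQW (K : Type) [Field K] (q α β γ : K) := RingQuot (CQWRel K q α β γ)

variable {K : Type} [Field K]

/-- The generator `x` of `A(α,β,γ)`. -/
def Xg (q α β γ : K) : CQW K q α β γ := RingQuot.mkAlgHom K (CQWRel K q α β γ) (ι K 0)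

/-- The generator `y` of `A(α,β,γ)`. -/
def Yg (q α β γ : K) : CQW K q α β γ := RingQuot.mkAlgHom K (CQWRel K q α β γ) (ι K 1)

/-- The generator `z` of `A(α,β,γ)`. -/
def Zg (q α β γ : K) : CQW K q α β γ := RingQuot.mkAlgHom K (CQWRel K q α β γ) (ι K 2)

lemma aux_pow {A : Type*} [Ring A] [Algebra K A] (a b : A) (c d : K)
    (h : a * b = c • (b * a) + algebraMap K A d) :
    ∀ n : ℕ, a ^ (n + 1) * b =
      c ^ (n + 1) • (b * a ^ (n + 1)) +
      (∑ k ∈ Finset.range (n + 1), c ^ k) • ((algebraMap K A) d * a ^ n) := by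
  intro n
  induction n with
  | zero => simpa using h
  | succ n ih =>
      have hpow : a ^ (n + 2) * b = a * (a ^ (n + 1) * b) := by
        rw [pow_succ', mul_assoc]
      have hd : a * ((algebraMap K A) d * a ^ n) = algebraMap K A d * a ^ (n + 1) := by
        rw [← mul_assoc, ← Algebra.commutes d a, mul_assoc, ← pow_succ']
      rw [hpow, ih, mul_add, mul_smul_comm, mul_smul_comm, ← mul_assoc, h, hd,
        Finset.sum_range_succ, add_smul, add_mul, smul_mul_assoc, smul_add, smul_smul,
        mul_assoc b a, ← pow_succ', ← pow_succ,
        Finset.sum_range_succ (fun k => c ^ k) (n+1), Finset.sum_range_succ, add_smul, add_smul]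
      abel

lemma aux_comm {A : Type*} [Ring A] [Algebra K A] (a b : A) (c d : K) (l : ℕ) (hl : 0 < l)
    (h : a * b = c • (b * a) + algebraMap K A d)
    (hc : c ^ l = 1) (hs : ∑ k ∈ Finset.range l, c ^ k = 0) :
    a ^ l * b = b * a ^ l := by
  obtain ⟨n, rfl⟩ := Nat.exists_eq_add_of_lt hl
  rw [zero_add] at *
  rw [aux_pow a b c d h n, hc, hs, one_smul, zero_smul, add_zero]

lemma aux_rev {A : Type*} [Ring A] [Algebra K A] (a b : A) (c d : K) (hc : c ≠ 0)
    (h : a * b = c • (b * a) + algebraMap K A d) :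
    b * a = c⁻¹ • (a * b) + algebraMap K A (-(c⁻¹ * d)) := by
  have hm : algebraMap K A (-(c⁻¹ * d)) = -(c⁻¹ • algebraMap K A d) := by
    rw [map_neg, map_mul, ← Algebra.smul_def]
  rw [h, hm, smul_add, smul_smul, inv_mul_cancel₀ hc, one_smul, add_neg_cancel_right]

lemma aux_central (q α β γ : K) (w : CQW K q α β γ)
    (hx : Xg q α β γ * w = w * Xg q α β γ)
    (hy : Yg q α β γ * w = w * Yg q α β γ)
    (hz : Zg q α β γ * w = w * Zg q α β γ) :
    w ∈ Subalgebra.center K (CQW K q α β γ) := by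
  rw [Subalgebra.mem_center_iff]
  intro b
  obtain ⟨p, rfl⟩ := RingQuot.mkAlgHom_surjective K (CQWRel K q α β γ) b
  induction p using FreeAlgebra.induction with
  | grade0 r => simp [AlgHom.commutes, Algebra.commutes]
  | grade1 i =>
      fin_cases i
      · exact hx
      · exact hy
      · exact hz
  | mul p₁ p₂ h₁ h₂ =>
      rw [map_mul, mul_assoc, h₂, ← mul_assoc, h₁, mul_assoc]
  | add p₁ p₂ h₁ h₂ =>
      rw [map_add, add_mul, mul_add, h₁, h₂]

/-- If `q²` is a primitive `l`-th root of unity (`l > 1`), then `x^l`, `y^l` and `z^l`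
are central in `A(α,β,γ)`. -/
theorem stmt4 (q α β γ : K) (l : ℕ) (hl : 1 < l) (hq : IsPrimitiveRoot (q ^ 2) l) :
    Xg q α β γ ^ l ∈ Subalgebra.center K (CQW K q α β γ) ∧
    Yg q α β γ ^ l ∈ Subalgebra.center K (CQW K q α β γ) ∧
    Zg q α β γ ^ l ∈ Subalgebra.center K (CQW K q α β γ) := by
  have hl0 : 0 < l := Nat.lt_of_lt_of_le Nat.one_pos hl.le
  set c : K := q ^ 2 with hcdef
  have hc0 : c ≠ 0 := by
    intro h
    have := hq.pow_eq_one
    rw [h, zero_pow hl0.ne'] at this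
    exact zero_ne_one this
  have hcinv : q⁻¹ ^ 2 = c⁻¹ := by rw [inv_pow]
  have hc1 : c ≠ 1 := hq.ne_one hl
  have hcl : c ^ l = 1 := hq.pow_eq_one
  have hcinv0 : c⁻¹ ≠ 0 := inv_ne_zero hc0
  have hcinv1 : c⁻¹ ≠ 1 := by
    intro h
    exact hc1 (by rw [← inv_inv c, h, inv_one])
  have hcinvl : c⁻¹ ^ l = 1 := by rw [inv_pow, hcl, inv_one]
  have hsum : ∀ e : K, e ≠ 1 → e ^ l = 1 → ∑ k ∈ Finset.range l, e ^ k = 0 := by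
    intro e he hel
    rw [geom_sum_eq he, hel, sub_self, zero_div]
  have hs : ∑ k ∈ Finset.range l, c ^ k = 0 := hsum c hc1 hcl
  have hsinv : ∑ k ∈ Finset.range l, c⁻¹ ^ k = 0 := hsum c⁻¹ hcinv1 hcinvl
  set X := Xg q α β γ
  set Y := Yg q α β γ
  set Z := Zg q α β γ
  -- the three relations in the quotient
  have hxy : X * Y = c • (Y * X) + algebraMap K _ α := by
    have := RingQuot.mkAlgHom_rel K (CQWRel.xy (K := K) (q := q) (α := α) (β := β) (γ := γ))
    simp only [map_add, map_mul, map_smul, AlgHom.commutes] at this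
    exact this
  have hxz : X * Z = c⁻¹ • (Z * X) + algebraMap K _ β := by
    have := RingQuot.mkAlgHom_rel K (CQWRel.xz (K := K) (q := q) (α := α) (β := β) (γ := γ))
    rw [← hcinv]
    simp only [map_add, map_mul, map_smul, AlgHom.commutes] at this
    exact this
  have hyz : Y * Z = c • (Z * Y) + algebraMap K _ γ := by
    have := RingQuot.mkAlgHom_rel K (CQWRel.yz (K := K) (q := q) (α := α) (β := β) (γ := γ))
    simp only [map_add, map_mul, map_smul, AlgHom.commutes] at this
    exact this
  -- the reversed relations
  have hyx := aux_rev X Y c α hc0 hxy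
  have hzx := aux_rev X Z c⁻¹ β hcinv0 hxz
  have hzy := aux_rev Y Z c γ hc0 hyz
  rw [inv_inv] at hzx
  -- the six commutations
  have hXY : X ^ l * Y = Y * X ^ l := aux_comm X Y c α l hl0 hxy hcl hs
  have hXZ : X ^ l * Z = Z * X ^ l := aux_comm X Z c⁻¹ β l hl0 hxz hcinvl hsinv
  have hYX : Y ^ l * X = X * Y ^ l := aux_comm Y X c⁻¹ _ l hl0 hyx hcinvl hsinv
  have hYZ : Y ^ l * Z = Z * Y ^ l := aux_comm Y Z c γ l hl0 hyz hcl hs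
  have hZX : Z ^ l * X = X * Z ^ l := aux_comm Z X c _ l hl0 hzx hcl hs
  have hZY : Z ^ l * Y = Y * Z ^ l := aux_comm Z Y c⁻¹ _ l hl0 hzy hcinvl hsinv
  exact ⟨aux_central q α β γ _ ((Commute.refl X).pow_right l) hXY.symm hXZ.symm,
    aux_central q α β γ _ hYX.symm ((Commute.refl Y).pow_right l) hYZ.symm,
    aux_central q α β γ _ hZX.symm hZY.symm ((Commute.refl Z).pow_right l)⟩
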